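/- arXiv:2112.13363 — 2 statements merged into one kernel-verified Lean document; each statement's English description precedes it below -/
import Mathlib

section
/- First-order pathwise derivatives of S_m (part of Lemma 3.1): Fix m ∈ ℕ⁺ and (t̂,a) ∈ Λ̂, and define S_m^{t̂,a}(t,x) := S_m(t,x,t̂,a) for (t,x) ∈ Λ̂^{t̂}. Then S_m^{t̂,a} is d_∞-continuous on Λ̂^{t̂}, its horizontal derivative exists and satisfies ∂_t S_m^{t̂,a}(t,x) = 0 for all (t,x) ∈ Λ̂^{t̂}, and for each i = 1,…,d the vertical derivative exists and satisfies ∂_{x_i} S_m^{t̂,a}(t,x) = -6m·(|x - a_{t-t̂}|_C^{2m} - |x(0)-a(0)|^{2m})²·|x(0)-a(0)|^{2m-2}·(x_i(0)-a_i(0)) / |x - a_{t-t̂}|_C^{4m} if |x - a_{t-t̂}|_C ≠ 0, and ∂_{x_i} S_m^{t̂,a}(t,x) = 0 if |x - a_{t-t̂}|_C = 0 (here x_i(0) := ⟨x(0), e_i⟩, and for m = 1 the factor |x(0)-a(0)|^{2m-2} is interpreted as 1). Moreover ∂_x S_m^{t̂,a} is d_∞-continuous on Λ̂^{t̂}. 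-/
open Filter Topology MeasureTheory Matrix
open scoped RealInnerProductSpace

noncomputable section

namespace PathHJB

/-- The domain `(-∞,0]` of the paths. -/
abbrev PathDom : Type := Set.Iic (0 : ℝ)

abbrev Eucl (d : ℕ) := EuclideanSpace ℝ (Fin d)

/-- Paths on `(-∞,0]` with values in `ℝ^d`. -/
abbrev Pth (d : ℕ) := PathDom → Eucl d

def zeroPt : PathDom := ⟨0, Set.self_mem_Iic⟩

/-- The sup norm `|x|_C`. -/
def normC {d : ℕ} (x : Pth d) : ℝ := ⨆ θ : PathDom, ‖x θ‖

/-- The shifted path `x_h`. -/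
def shift {d : ℕ} (x : Pth d) (h : ℝ) : Pth d := fun θ =>
  if hθ : -h ≤ θ.1 then x zeroPt
  else x ⟨θ.1 + h, Set.mem_Iic.mpr (by push_neg at hθ; linarith)⟩

/-- The vertical perturbation `x + v · 1_{{0}}`. -/
def vpert {d : ℕ} (x : Pth d) (v : Eucl d) : Pth d := fun θ =>
  if θ.1 = 0 then x θ + v else x θ

/-- Càdlàg: right-continuous with left limits. -/
def IsCadlag {d : ℕ} (x : Pth d) : Prop :=
  (∀ θ : PathDom, ContinuousWithinAt x {η : PathDom | θ.1 ≤ η.1} θ) ∧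
  (∀ θ : PathDom, ∃ L : Eucl d, Tendsto x (nhdsWithin θ {η : PathDom | η.1 < θ.1}) (nhds L))

/-- `𝒟₀`: càdlàg paths vanishing at `-∞`. -/
def D0 (d : ℕ) : Set (Pth d) := {x | IsCadlag x ∧ Tendsto x atBot (nhds 0)}

/-- `𝒞₀`: continuous paths vanishing at `-∞`. -/
def C0 (d : ℕ) : Set (Pth d) := {x | Continuous x ∧ Tendsto x atBot (nhds 0)}

/-- The metric `d_∞`. -/
def dInfty {d : ℕ} (p q : ℝ × Pth d) : ℝ :=
  if p.1 ≤ q.1 then |q.1 - p.1| + normC (shift p.2 (q.1 - p.1) - q.2)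
  else |p.1 - q.1| + normC (shift q.2 (p.1 - q.1) - p.2)

/-- `Λ̂^t = [t,∞) × 𝒟₀`. -/
def LamHat (d : ℕ) (t : ℝ) : Set (ℝ × Pth d) := {p | t ≤ p.1 ∧ p.2 ∈ D0 d}

/-- `Λ^t = [t,∞) × 𝒞₀`. -/
def Lam (d : ℕ) (t : ℝ) : Set (ℝ × Pth d) := {p | t ≤ p.1 ∧ p.2 ∈ C0 d}

def stdBasis (d : ℕ) (i : Fin d) : Eucl d := EuclideanSpace.single i 1

/-- Horizontal (Dupire) derivative. -/
def HasHorizDerivAt {d : ℕ} (f : ℝ × Pth d → ℝ) (p : ℝ × Pth d) (v : ℝ) : Prop :=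
  Tendsto (fun h : ℝ => (f (p.1 + h, shift p.2 h) - f p) / h) (𝓝[>] (0:ℝ)) (𝓝 v)

/-- Vertical (Dupire) derivative in direction `e_i`. -/
def HasVertDerivAt {d : ℕ} (f : ℝ × Pth d → ℝ) (p : ℝ × Pth d) (i : Fin d) (v : ℝ) : Prop :=
  Tendsto (fun h : ℝ => (f (p.1, vpert p.2 (h • stdBasis d i)) - f p) / h) (𝓝[≠] (0:ℝ)) (𝓝 v)

/-- Continuity on a set w.r.t. `d_∞`. -/
def DContinuousOn {d : ℕ} {E : Type*} [NormedAddCommGroup E]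
    (f : ℝ × Pth d → E) (S : Set (ℝ × Pth d)) : Prop :=
  ∀ p ∈ S, ∀ ε > (0:ℝ), ∃ δ > (0:ℝ), ∀ q ∈ S, dInfty p q < δ → ‖f q - f p‖ < ε

/-- Uniform continuity on a set w.r.t. `d_∞`. -/
def DUnifContOn {d : ℕ} {E : Type*} [NormedAddCommGroup E]
    (f : ℝ × Pth d → E) (S : Set (ℝ × Pth d)) : Prop :=
  ∀ ε > (0:ℝ), ∃ δ > (0:ℝ), ∀ p ∈ S, ∀ q ∈ S, dInfty p q < δ → ‖f q - f p‖ < ε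

def BoundedOn {d : ℕ} {E : Type*} [NormedAddCommGroup E]
    (f : ℝ × Pth d → E) (S : Set (ℝ × Pth d)) : Prop :=
  ∃ M : ℝ, ∀ p ∈ S, ‖f p‖ ≤ M

def PolyGrowthOn {d : ℕ} {E : Type*} [NormedAddCommGroup E]
    (f : ℝ × Pth d → E) (S : Set (ℝ × Pth d)) : Prop :=
  ∃ C : ℝ, ∃ k : ℕ, ∀ p ∈ S, ‖f p‖ ≤ C * (1 + |p.1| + normC p.2) ^ k

/-- `f ∈ C_p^{1,2}(Λ̂^t)`, with prescribed pathwise derivatives. -/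
structure IsCp12Hat (d : ℕ) (t : ℝ) (f : ℝ × Pth d → ℝ) (ft : ℝ × Pth d → ℝ)
    (fx : ℝ × Pth d → Eucl d) (fxx : ℝ × Pth d → Matrix (Fin d) (Fin d) ℝ) : Prop where
  horiz : ∀ p ∈ LamHat d t, HasHorizDerivAt f p (ft p)
  vert : ∀ p ∈ LamHat d t, ∀ i, HasVertDerivAt f p i (fx p i)
  vert2 : ∀ p ∈ LamHat d t, ∀ i j, HasVertDerivAt (fun q => fx q j) p i (fxx p i j)
  cont : DContinuousOn f (LamHat d t)
  cont_t : DContinuousOn ft (LamHat d t)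
  cont_x : DContinuousOn fx (LamHat d t)
  cont_xx : ∀ i j, DContinuousOn (fun p => fxx p i j) (LamHat d t)
  growth : PolyGrowthOn f (LamHat d t)
  growth_t : PolyGrowthOn ft (LamHat d t)
  growth_x : PolyGrowthOn fx (LamHat d t)
  growth_xx : ∀ i j, PolyGrowthOn (fun p => fxx p i j) (LamHat d t)

/-- Hilbert–Schmidt norm of a matrix. -/
def hsNorm {m n : ℕ} (A : Matrix (Fin m) (Fin n) ℝ) : ℝ :=
  Real.sqrt (∑ i, ∑ j, (A i j) ^ 2)

/-- The Hamiltonian `H`. -/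
def Ham {d n : ℕ} {U : Type*} (b : Pth d → U → Eucl d)
    (σ' : Pth d → U → Matrix (Fin d) (Fin n) ℝ) (q : Pth d → U → ℝ)
    (x : Pth d) (p : Eucl d) (l : Matrix (Fin d) (Fin d) ℝ) : ℝ :=
  ⨅ u : U, ((inner ℝ p (b x u) : ℝ) + (1/2) * (l * (σ' x u * (σ' x u)ᵀ)).trace + q x u)

/-- Hypothesis 4.2. -/
structure Hyp42 {d n : ℕ} {U : Type*} [PseudoMetricSpace U] (L : ℝ)
    (b : Pth d → U → Eucl d) (σ' : Pth d → U → Matrix (Fin d) (Fin n) ℝ)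
    (q : Pth d → U → ℝ) : Prop where
  pos : 0 < L
  continuous : ∀ x ∈ C0 d, ∀ u : U, ∀ ε > (0:ℝ), ∃ δ > (0:ℝ), ∀ y ∈ C0 d, ∀ u' : U,
    normC (x - y) < δ → dist u u' < δ →
    ‖b x u - b y u'‖ < ε ∧ hsNorm (σ' x u - σ' y u') < ε ∧ |q x u - q y u'| < ε
  bound_b : ∀ x ∈ C0 d, ∀ u : U, ‖b x u‖ ^ 2 ≤ L ^ 2 * (1 + normC x ^ 2)
  bound_σ : ∀ x ∈ C0 d, ∀ u : U, hsNorm (σ' x u) ^ 2 ≤ L ^ 2 * (1 + normC x ^ 2)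
  bound_q : ∀ x ∈ C0 d, ∀ u : U, (q x u) ^ 2 ≤ L ^ 2 * (1 + normC x ^ 2)
  lip_b : ∀ x ∈ C0 d, ∀ y ∈ C0 d, ∀ u : U, ‖b x u - b y u‖ ≤ L * normC (x - y)
  lip_σ : ∀ x ∈ C0 d, ∀ y ∈ C0 d, ∀ u : U, hsNorm (σ' x u - σ' y u) ≤ L * normC (x - y)
  lip_q : ∀ x ∈ C0 d, ∀ y ∈ C0 d, ∀ u : U, |q x u - q y u| ≤ L * normC (x - y)

/-- Viscosity subsolution of `-λ w + ∂_t w + H(x, ∂_x w, ∂_{xx} w) = 0`. -/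
def IsViscSubsol {d n : ℕ} {U : Type*} (lam : ℝ) (b : Pth d → U → Eucl d)
    (σ' : Pth d → U → Matrix (Fin d) (Fin n) ℝ) (q : Pth d → U → ℝ)
    (w : Pth d → ℝ) : Prop :=
  ∀ s : ℝ, 0 ≤ s → ∀ x ∈ C0 d,
    ∀ (φ φt : ℝ × Pth d → ℝ) (φx : ℝ × Pth d → Eucl d)
      (φxx : ℝ × Pth d → Matrix (Fin d) (Fin d) ℝ),
      IsCp12Hat d s φ φt φx φxx →
      w x - φ (s, x) = 0 →
      (∀ p ∈ Lam d s, w p.2 - φ p ≤ 0) →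
      0 ≤ -lam * w x + φt (s, x) + Ham b σ' q x (φx (s, x)) (φxx (s, x))

/-- Viscosity supersolution. -/
def IsViscSupersol {d n : ℕ} {U : Type*} (lam : ℝ) (b : Pth d → U → Eucl d)
    (σ' : Pth d → U → Matrix (Fin d) (Fin n) ℝ) (q : Pth d → U → ℝ)
    (w : Pth d → ℝ) : Prop :=
  ∀ s : ℝ, 0 ≤ s → ∀ x ∈ C0 d,
    ∀ (φ φt : ℝ × Pth d → ℝ) (φx : ℝ × Pth d → Eucl d)
      (φxx : ℝ × Pth d → Matrix (Fin d) (Fin d) ℝ),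
      IsCp12Hat d s φ φt φx φxx →
      w x + φ (s, x) = 0 →
      (∀ p ∈ Lam d s, 0 ≤ w p.2 + φ p) →
      -lam * w x - φt (s, x) + Ham b σ' q x (-φx (s, x)) (-φxx (s, x)) ≤ 0


/-- The two-argument functional `S_m(t,x,s,y)`. -/
def SmP {d : ℕ} (m : ℕ) (p q : ℝ × Pth d) : ℝ :=
  if normC (shift p.2 (max (q.1 - p.1) 0) - shift q.2 (max (p.1 - q.1) 0)) = 0 then 0
  else (normC (shift p.2 (max (q.1 - p.1) 0) - shift q.2 (max (p.1 - q.1) 0)) ^ (2*m)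
        - ‖p.2 zeroPt - q.2 zeroPt‖ ^ (2*m)) ^ 3
       / normC (shift p.2 (max (q.1 - p.1) 0) - shift q.2 (max (p.1 - q.1) 0)) ^ (4*m)

/-- `Υ^{m,M}(t,x,s,y)`. -/
def UpsP {d : ℕ} (m : ℕ) (M : ℝ) (p q : ℝ × Pth d) : ℝ :=
  SmP m p q + M * ‖p.2 zeroPt - q.2 zeroPt‖ ^ (2*m)

/-- `Ῡ^{m,M}(t,x,s,y) = Υ^{m,M}(t,x,s,y) + |s-t|²`. -/
def UpsBarP {d : ℕ} (m : ℕ) (M : ℝ) (p q : ℝ × Pth d) : ℝ :=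
  UpsP m M p q + (q.1 - p.1) ^ 2

/-- The single-path functional `Υ^{m,M}(x)`. -/
def Ups0 {d : ℕ} (m : ℕ) (M : ℝ) (x : Pth d) : ℝ :=
  (if normC x = 0 then 0
   else (normC x ^ (2*m) - ‖x zeroPt‖ ^ (2*m)) ^ 3 / normC x ^ (4*m))
  + M * ‖x zeroPt‖ ^ (2*m)

/-- `w̃^{t̂}` before taking the upper semicontinuous envelope:
the sup of `w(t,ξ)` over `ξ ∈ 𝒞₀` with `ξ(0) = x₀`. -/
def sliceSup {d : ℕ} (w : ℝ × Pth d → ℝ) (t : ℝ) (x0 : Eucl d) : ℝ :=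
  sSup {r : ℝ | ∃ ξ ∈ C0 d, ξ zeroPt = x0 ∧ r = w (t, ξ)}

def tildeW {d : ℕ} (w : ℝ × Pth d → ℝ) (tHat : ℝ) : ℝ × Eucl d → ℝ := fun p =>
  if tHat ≤ p.1 then sliceSup w p.1 p.2
  else sliceSup w tHat p.2 - Real.sqrt (tHat - p.1)

/-- Upper semicontinuous envelope. -/
def uscEnv {d : ℕ} (g : ℝ × Eucl d → ℝ) : ℝ × Eucl d → ℝ := fun p =>
  Filter.limsup g (nhds p)

/-- A local modulus of continuity. -/
structure LocalModulus (ρ : ℝ → ℝ → ℝ) : Prop where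
  cont : Continuous fun p : ℝ × ℝ => ρ p.1 p.2
  nonneg : ∀ t r, 0 ≤ t → 0 ≤ r → 0 ≤ ρ t r
  zero : ∀ r, 0 ≤ r → ρ 0 r = 0
  subadd : ∀ t s r, 0 ≤ t → 0 ≤ s → 0 ≤ r → ρ (t + s) r ≤ ρ t r + ρ s r
  mono : ∀ t r r', 0 ≤ t → 0 ≤ r → r ≤ r' → ρ t r ≤ ρ t r'

/-- Upper semicontinuity on a set w.r.t. `d_∞`. -/
def DUSCOn {d : ℕ} (w : ℝ × Pth d → ℝ) (S : Set (ℝ × Pth d)) : Prop :=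
  ∀ p ∈ S, ∀ ε > (0:ℝ), ∃ δ > (0:ℝ), ∀ q ∈ S, dInfty p q < δ → w q < w p + ε

def BddAboveOn {d : ℕ} (w : ℝ × Pth d → ℝ) (S : Set (ℝ × Pth d)) : Prop :=
  ∃ M : ℝ, ∀ p ∈ S, w p ≤ M

/-- `limsup_{t+|x|_C → ∞} w(t,x)/(t+|x|_C) < 0` on `Λ`. -/
def NegLimsupAtInfty {d : ℕ} (w : ℝ × Pth d → ℝ) : Prop :=
  ∃ c < (0:ℝ), ∃ R : ℝ, ∀ p ∈ Lam d 0, R ≤ p.1 + normC p.2 →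
    w p ≤ c * (p.1 + normC p.2)

/-- `φ ∈ C^{1,2}([0,∞) × ℝ^d)` with prescribed derivatives. -/
structure IsC12Fin (d : ℕ) (φ φt : ℝ × Eucl d → ℝ) (φx : ℝ × Eucl d → Eucl d)
    (φxx : ℝ × Eucl d → Matrix (Fin d) (Fin d) ℝ) : Prop where
  ht : ∀ p : ℝ × Eucl d, HasDerivAt (fun s => φ (s, p.2)) (φt p) p.1
  hx : ∀ p : ℝ × Eucl d, HasGradientAt (fun y => φ (p.1, y)) (φx p) p.2
  hxx : ∀ p : ℝ × Eucl d, ∀ i j,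
    HasDerivAt (fun h : ℝ => φx (p.1, p.2 + h • stdBasis d j) i) (φxx p i j) 0
  cont : Continuous φ
  cont_t : Continuous φt
  cont_x : Continuous φx
  cont_xx : ∀ i j, Continuous fun p => φxx p i j

/-- The class `Φ(t̂, x̂₀, T)` of Definition 6.1. -/
def PhiClass (d : ℕ) (tHat : ℝ) (xHat0 : Eucl d) (T : ℝ) (f : ℝ × Eucl d → ℝ) : Prop :=
  ∃ r > (0:ℝ), ∀ L > (0:ℝ),
    ∀ (φ φt : ℝ × Eucl d → ℝ) (φx : ℝ × Eucl d → Eucl d)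
      (φxx : ℝ × Eucl d → Matrix (Fin d) (Fin d) ℝ),
      IsC12Fin d φ φt φx φxx →
      ∀ t : ℝ, ∀ x0 : Eucl d, 0 < t → t < T →
        (∀ s : ℝ, ∀ y : Eucl d, 0 ≤ s → s ≤ T → f (s, y) - φ (s, y) ≤ f (t, x0) - φ (t, x0)) →
        ∃ C > (0:ℝ),
          (|t - tHat| + ‖x0 - xHat0‖ < r →
           |f (t, x0)| + ‖φx (t, x0)‖ + hsNorm (φxx (t, x0)) ≤ L →
           C ≤ φt (t, x0))

/-- Operator norm of a square matrix, via the associated Euclidean linear map. -/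
def matOpNorm {ι : Type*} [Fintype ι] [DecidableEq ι] (A : Matrix ι ι ℝ) : ℝ :=
  ‖LinearMap.toContinuousLinearMap (Matrix.toEuclideanLin A)‖

/-- The second-derivative matrix of `φ : ℝ^d × ℝ^d → ℝ` at a point, as a
`(2d) × (2d)` matrix indexed by `Fin d ⊕ Fin d`. -/
def hess2 {d : ℕ} (φ : Eucl d × Eucl d → ℝ) (z : Eucl d × Eucl d) :
    Matrix (Fin d ⊕ Fin d) (Fin d ⊕ Fin d) ℝ := fun k l =>
  iteratedFDeriv ℝ 2 φ z
    ![Sum.elim (fun i => ((stdBasis d i, 0) : Eucl d × Eucl d))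
        (fun j => ((0, stdBasis d j) : Eucl d × Eucl d)) k,
      Sum.elim (fun i => ((stdBasis d i, 0) : Eucl d × Eucl d))
        (fun j => ((0, stdBasis d j) : Eucl d × Eucl d)) l]

/-- Hessian matrix of `φ : ℝ^d → ℝ`. -/
def hess1 {d : ℕ} (φ : Eucl d → ℝ) (z : Eucl d) : Matrix (Fin d) (Fin d) ℝ := fun i j =>
  iteratedFDeriv ℝ 2 φ z ![stdBasis d i, stdBasis d j]


/-- The path `x - a_{t-t̂}` appearing in `S_m(t,x,t̂,a)` (for `t ≥ t̂`). -/
def zRel {d : ℕ} (tHat : ℝ) (a : Pth d) (p : ℝ × Pth d) : Pth d :=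
  shift p.2 (max (tHat - p.1) 0) - shift a (max (p.1 - tHat) 0)
set_option maxHeartbeats 1000000

/- ===== auxiliary lemmas ===== -/

instance : Nonempty PathDom := ⟨zeroPt⟩

/-- Pointwise boundedness of a path. -/
def Bdd {d : ℕ} (x : Pth d) : Prop := ∃ M : ℝ, ∀ θ, ‖x θ‖ ≤ M

lemma Bdd.bddAbove {d : ℕ} {x : Pth d} (h : Bdd x) :
    BddAbove (Set.range fun θ => ‖x θ‖) := by
  obtain ⟨M, hM⟩ := h; exact ⟨M, by rintro _ ⟨θ, rfl⟩; exact hM θ⟩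

lemma normC_nonneg {d : ℕ} (x : Pth d) : 0 ≤ normC x :=
  Real.iSup_nonneg fun θ => norm_nonneg _

lemma le_normC {d : ℕ} {x : Pth d} (h : Bdd x) (θ : PathDom) : ‖x θ‖ ≤ normC x :=
  le_ciSup h.bddAbove θ

lemma normC_le {d : ℕ} {x : Pth d} {M : ℝ} (h : ∀ θ, ‖x θ‖ ≤ M) : normC x ≤ M :=
  ciSup_le h

lemma normC_congr_range {d : ℕ} {x y : Pth d}
    (h : (Set.range fun θ => ‖x θ‖) = Set.range fun θ => ‖y θ‖) : normC x = normC y := by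
  rw [normC, normC, iSup, iSup, h]

lemma normC_neg {d : ℕ} (x : Pth d) : normC (-x) = normC x := by
  simp only [normC, Pi.neg_apply, norm_neg]

lemma Bdd.sub {d : ℕ} {x y : Pth d} (hx : Bdd x) (hy : Bdd y) : Bdd (x - y) := by
  obtain ⟨M, hM⟩ := hx; obtain ⟨M', hM'⟩ := hy
  exact ⟨M + M', fun θ => (norm_sub_le _ _).trans (add_le_add (hM θ) (hM' θ))⟩

lemma Bdd.shift {d : ℕ} {x : Pth d} (hx : Bdd x) (h : ℝ) : Bdd (shift x h) := by
  obtain ⟨M, hM⟩ := hx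
  refine ⟨M, fun θ => ?_⟩
  rw [PathHJB.shift]
  split_ifs <;> apply hM

lemma Bdd.vpert {d : ℕ} {x : Pth d} (hx : Bdd x) (v : Eucl d) : Bdd (vpert x v) := by
  obtain ⟨M, hM⟩ := hx
  refine ⟨M + ‖v‖, fun θ => ?_⟩
  rw [PathHJB.vpert]
  split_ifs
  · exact (norm_add_le _ _).trans (add_le_add_left (hM θ) _)
  · exact (hM θ).trans (by simp [norm_nonneg])

lemma abs_normC_sub_normC_le {d : ℕ} {u v : Pth d} (hu : Bdd u) (hv : Bdd v) :
    |normC u - normC v| ≤ normC (u - v) := by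
  rw [abs_sub_le_iff]
  constructor
  · rw [sub_le_iff_le_add]
    refine normC_le fun θ => ?_
    calc ‖u θ‖ = ‖(u - v) θ + v θ‖ := by simp
      _ ≤ ‖(u - v) θ‖ + ‖v θ‖ := norm_add_le _ _
      _ ≤ normC (u - v) + normC v := add_le_add (le_normC (hu.sub hv) θ) (le_normC hv θ)
  · rw [sub_le_iff_le_add]
    refine normC_le fun θ => ?_
    calc ‖v θ‖ = ‖(u - v) θ - u θ‖ := by simp only [Pi.sub_apply]; rw [sub_sub_cancel_left]; simp
      _ ≤ ‖(u - v) θ‖ + ‖u θ‖ := norm_sub_le _ _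
      _ ≤ normC (u - v) + normC u := add_le_add (le_normC (hu.sub hv) θ) (le_normC hu θ)
lemma shift_zero {d : ℕ} (x : Pth d) : shift x 0 = x := by
  funext θ
  simp only [shift]
  split_ifs with h
  · have h' : (0:ℝ) ≤ θ.1 := by linarith
    have : θ = zeroPt := Subtype.ext (le_antisymm θ.2 h')
    rw [this]
  · simp only [add_zero]

lemma shift_zeroPt {d : ℕ} (x : Pth d) {h : ℝ} (hh : 0 ≤ h) : shift x h zeroPt = x zeroPt := by
  simp only [shift]
  rw [dif_pos (show -h ≤ (zeroPt : PathDom).1 from by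
    show -h ≤ (0:ℝ); linarith)]

lemma shift_shift {d : ℕ} (x : Pth d) {s h : ℝ} (hs : 0 ≤ s) (hh : 0 ≤ h) :
    shift (shift x s) h = shift x (s + h) := by
  funext θ
  have hz : ((zeroPt : PathDom) : ℝ) = 0 := rfl
  have hθ := Set.mem_Iic.mp θ.2
  simp only [shift]
  split_ifs <;>
    first
      | rfl
      | (exfalso; linarith)
      | (simp only [show θ.1 + (s + h) = θ.1 + h + s from by ring])

lemma shift_sub {d : ℕ} (x y : Pth d) (h : ℝ) : shift (x - y) h = shift x h - shift y h := by
  funext θ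
  simp only [Pi.sub_apply, shift]
  split_ifs <;> simp

lemma normC_shift {d : ℕ} (x : Pth d) {h : ℝ} (hh : 0 ≤ h) : normC (shift x h) = normC x := by
  refine normC_congr_range (Set.ext fun r => ⟨?_, ?_⟩)
  · rintro ⟨θ, rfl⟩
    simp only [shift]
    split_ifs with h1
    · exact ⟨zeroPt, rfl⟩
    · push_neg at h1
      exact ⟨⟨θ.1 + h, Set.mem_Iic.mpr (by linarith)⟩, rfl⟩
  · rintro ⟨θ, rfl⟩
    have hθ := Set.mem_Iic.mp θ.2
    refine ⟨⟨θ.1 - h, Set.mem_Iic.mpr (by linarith)⟩, ?_⟩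
    simp only [shift]
    split_ifs with h1
    · have h1' : -h ≤ θ.1 - h := h1
      have : θ = zeroPt := Subtype.ext (le_antisymm θ.2 (show (0:ℝ) ≤ θ.1 by linarith))
      rw [this]
    · simp only [show θ.1 - h + h = θ.1 from by ring]

lemma vpert_zeroPt {d : ℕ} (x : Pth d) (v : Eucl d) : vpert x v zeroPt = x zeroPt + v := by
  simp only [vpert]
  rw [if_pos (show (zeroPt : PathDom).1 = 0 from rfl)]

lemma vpert_ne {d : ℕ} (x : Pth d) (v : Eucl d) {θ : PathDom} (h : θ.1 ≠ 0) :
    vpert x v θ = x θ := by simp only [vpert]; rw [if_neg h]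

lemma vpert_zero {d : ℕ} (x : Pth d) : vpert x 0 = x := by
  funext θ; simp only [vpert]; split_ifs <;> simp

lemma vpert_sub {d : ℕ} (x y : Pth d) (v : Eucl d) : vpert x v - y = vpert (x - y) v := by
  funext θ
  simp only [Pi.sub_apply, vpert]
  split_ifs <;> [abel; rfl]

lemma normC_vpert {d : ℕ} {z : Pth d} (hb : Bdd z) (v : Eucl d) :
    normC (vpert z v) = max (normC (vpert z (-(z zeroPt)))) ‖z zeroPt + v‖ := by
  apply le_antisymm
  · refine normC_le fun θ => ?_
    by_cases h0 : θ.1 = 0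
    · have hθ : θ = zeroPt := Subtype.ext h0
      rw [hθ, vpert_zeroPt]
      exact le_max_right _ _
    · rw [vpert_ne _ _ h0]
      have : ‖z θ‖ = ‖vpert z (-(z zeroPt)) θ‖ := by rw [vpert_ne _ _ h0]
      rw [this]
      exact le_trans (le_normC (hb.vpert _) θ) (le_max_left _ _)
  · refine max_le (normC_le fun θ => ?_) ?_
    · by_cases h0 : θ.1 = 0
      · have hθ : θ = zeroPt := Subtype.ext h0
        rw [hθ, vpert_zeroPt]
        simpa using normC_nonneg (vpert z v)
      · rw [vpert_ne _ _ h0, ← vpert_ne z v h0]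
        exact le_normC (hb.vpert _) θ
    · rw [← vpert_zeroPt z v]
      exact le_normC (hb.vpert _) zeroPt
lemma bdd_of_mem_D0 {d : ℕ} {x : Pth d} (hx : x ∈ D0 d) : Bdd x := by
  obtain ⟨⟨hr, hl⟩, h0⟩ := hx
  have h1 : ∀ᶠ θ : PathDom in atBot, ‖x θ‖ < 1 := by
    have := Metric.tendsto_nhds.mp h0 1 one_pos
    simpa [dist_zero_right] using this
  obtain ⟨K, hK⟩ := Filter.eventually_atBot.mp h1
  have key : ∀ t ∈ Set.Icc K.1 0, ∃ U : Set ℝ, ∃ M : ℝ, IsOpen U ∧ t ∈ U ∧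
      ∀ η : PathDom, η.1 ∈ U → ‖x η‖ ≤ M := by
    rintro t ⟨-, ht0⟩
    set θt : PathDom := ⟨t, ht0⟩ with hθt
    obtain ⟨δ₁, hδ₁, hR⟩ := Metric.tendsto_nhdsWithin_nhds.mp (hr θt) 1 one_pos
    obtain ⟨L, hL⟩ := hl θt
    obtain ⟨δ₂, hδ₂, hLb⟩ := Metric.tendsto_nhdsWithin_nhds.mp hL 1 one_pos
    refine ⟨Set.Ioo (t - δ₂) (t + δ₁), max ‖x θt‖ ‖L‖ + 1, isOpen_Ioo,
      ⟨by linarith, by linarith⟩, ?_⟩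
    intro η hη
    rcases le_or_gt t η.1 with hc | hc
    · have h2 : dist η θt < δ₁ := by
        rw [Subtype.dist_eq, Real.dist_eq]
        rw [abs_lt]
        constructor
        · show -δ₁ < η.1 - θt.1; have := hη.1; simp only [hθt]; linarith
        · show η.1 - θt.1 < δ₁; have := hη.2; simp only [hθt]; linarith
      have h3 := hR (show η ∈ {η' : PathDom | θt.1 ≤ η'.1} from hc) h2
      rw [dist_eq_norm] at h3
      calc ‖x η‖ ≤ ‖x θt‖ + ‖x η - x θt‖ := by
            have := norm_add_le (x θt) (x η - x θt); simpa using this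
        _ ≤ max ‖x θt‖ ‖L‖ + 1 := add_le_add (le_max_left _ _) h3.le
    · have h2 : dist η θt < δ₂ := by
        rw [Subtype.dist_eq, Real.dist_eq]
        rw [abs_lt]
        constructor
        · show -δ₂ < η.1 - θt.1; have := hη.1; simp only [hθt]; linarith
        · show η.1 - θt.1 < δ₂; simp only [hθt]; linarith
      have h3 := hLb (show η ∈ {η' : PathDom | η'.1 < θt.1} from hc) h2
      rw [dist_eq_norm] at h3
      calc ‖x η‖ ≤ ‖L‖ + ‖x η - L‖ := by
            have := norm_add_le L (x η - L); simpa using this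
        _ ≤ max ‖x θt‖ ‖L‖ + 1 := add_le_add (le_max_right _ _) h3.le
  classical
  choose! U M hopen hmem hbd using key
  have hcov : Set.Icc K.1 0 ⊆ ⋃ t ∈ Set.Icc K.1 0, U t := fun t ht =>
    Set.mem_biUnion ht (hmem t ht)
  obtain ⟨F, hFsub, hFfin, hFcov⟩ :=
    isCompact_Icc.elim_finite_subcover_image (fun t ht => hopen t ht) hcov
  refine ⟨1 + ∑ t ∈ hFfin.toFinset, |M t|, fun θ => ?_⟩
  have hsum : (0:ℝ) ≤ ∑ t ∈ hFfin.toFinset, |M t| :=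
    Finset.sum_nonneg fun _ _ => abs_nonneg _
  rcases le_or_gt θ.1 K.1 with h | h
  · have hθK : θ ≤ K := h
    have := (hK θ hθK).le
    linarith
  · have hmem' : θ.1 ∈ Set.Icc K.1 0 := ⟨h.le, Set.mem_Iic.mp θ.2⟩
    have := hFcov hmem'
    simp only [Set.mem_iUnion] at this
    obtain ⟨t, htF, hU⟩ := this
    have hb := hbd t (hFsub htF) θ hU
    have h1 : M t ≤ |M t| := le_abs_self _
    have h2 : |M t| ≤ ∑ t ∈ hFfin.toFinset, |M t| :=
      Finset.single_le_sum (f := fun s => |M s|) (fun _ _ => abs_nonneg _) (hFfin.mem_toFinset.mpr htF)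
    linarith
lemma zRel_eq {d : ℕ} (tHat : ℝ) (a : Pth d) (p : ℝ × Pth d) (ht : tHat ≤ p.1) :
    zRel tHat a p = p.2 - shift a (p.1 - tHat) := by
  rw [zRel, max_eq_right (sub_nonpos.mpr ht), max_eq_left (sub_nonneg.mpr ht), shift_zero]

lemma zRel_zeroPt {d : ℕ} (tHat : ℝ) (a : Pth d) (p : ℝ × Pth d) :
    zRel tHat a p zeroPt = p.2 zeroPt - a zeroPt := by
  rw [zRel, Pi.sub_apply, shift_zeroPt _ (le_max_right _ _), shift_zeroPt _ (le_max_right _ _)]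

lemma bdd_zRel {d : ℕ} {tHat : ℝ} {a : Pth d} {p : ℝ × Pth d}
    (hx : Bdd p.2) (ha : Bdd a) : Bdd (zRel tHat a p) :=
  (hx.shift _).sub (ha.shift _)

/-- The scalar profile of `S_m`. -/
def Gf (m : ℕ) (N r : ℝ) : ℝ := if N = 0 then 0 else (N ^ (2*m) - r ^ (2*m)) ^ 3 / N ^ (4*m)

/-- The scalar coefficient of the vertical derivative. -/
def cf (m : ℕ) (N r : ℝ) : ℝ :=
  if N = 0 then (0:ℝ)
  else -(6 * m : ℝ) * (N ^ (2*m) - r ^ (2*m)) ^ 2 * r ^ (2*m-2) / N ^ (4*m)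

lemma SmP_eq {d : ℕ} (m : ℕ) (tHat : ℝ) (a : Pth d) (p : ℝ × Pth d) :
    SmP m p (tHat, a) = Gf m (normC (zRel tHat a p)) ‖p.2 zeroPt - a zeroPt‖ := rfl

lemma pow_succ_sub_le {a b : ℝ} (hb : 0 ≤ b) (hba : b ≤ a) (n : ℕ) :
    a ^ (n+1) - b ^ (n+1) ≤ (n+1 : ℝ) * a ^ n * (a - b) := by
  induction n with
  | zero => simp
  | succ k ih =>
    have ha : 0 ≤ a := hb.trans hba
    have h1 : b ^ (k+1) ≤ a ^ (k+1) := pow_le_pow_left₀ hb hba _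
    have h2 : a ^ (k+1+1) - b ^ (k+1+1)
        = a * (a^(k+1) - b^(k+1)) + b^(k+1) * (a - b) := by ring
    have h3 : a * (a^(k+1) - b^(k+1)) ≤ a * ((k+1 : ℝ) * a^k * (a-b)) :=
      mul_le_mul_of_nonneg_left ih ha
    have h4 : b^(k+1) * (a-b) ≤ a^(k+1) * (a-b) :=
      mul_le_mul_of_nonneg_right h1 (by linarith)
    have h5 : a * ((k+1 : ℝ) * a^k * (a-b)) = (k+1 : ℝ) * a^(k+1) * (a-b) := by ring
    push_cast
    nlinarith [h2, h3, h4, h5]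

lemma Gf_cont (m : ℕ) (hm : 1 ≤ m) (N₀ r₀ : ℝ) (h0 : 0 ≤ r₀) (h1 : r₀ ≤ N₀) :
    ∀ ε > (0:ℝ), ∃ δ > (0:ℝ), ∀ N r : ℝ, 0 ≤ r → r ≤ N →
      |N - N₀| < δ → |r - r₀| < δ → |Gf m N r - Gf m N₀ r₀| < ε := by
  intro ε hε
  rcases eq_or_lt_of_le (h0.trans h1) with hN0 | hN0
  · -- N₀ = 0, hence r₀ = 0
    refine ⟨min 1 ε, by positivity, fun N r hr hrN hdN hdr => ?_⟩
    have hN : N < min 1 ε := by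
      rw [← hN0, sub_zero, abs_of_nonneg (hr.trans hrN)] at hdN; exact hdN
    have hN1 : N ≤ 1 := (lt_of_lt_of_le hN (min_le_left _ _)).le
    have hNε : N < ε := lt_of_lt_of_le hN (min_le_right _ _)
    have hGf0 : Gf m N₀ r₀ = 0 := by rw [← hN0]; simp [Gf]
    rw [hGf0, sub_zero]
    by_cases hNz : N = 0
    · simpa [Gf, hNz] using hε
    · have hNpos : 0 < N := lt_of_le_of_ne (hr.trans hrN) (Ne.symm hNz)
      have hA0 : 0 ≤ N^(2*m) - r^(2*m) := sub_nonneg.mpr (pow_le_pow_left₀ hr hrN _)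
      have hAN : N^(2*m) - r^(2*m) ≤ N^(2*m) := by
        have := pow_nonneg hr (2*m); linarith
      have hcube : (N^(2*m) - r^(2*m))^3 ≤ (N^(2*m))^3 := pow_le_pow_left₀ hA0 hAN 3
      have hsplit : (N^(2*m))^3 = N^(2*m) * N^(4*m) := by
        rw [← pow_mul, ← pow_add]; congr 1; ring
      have hGle : Gf m N r ≤ N^(2*m) := by
        rw [Gf, if_neg hNz, div_le_iff₀ (pow_pos hNpos _)]
        rw [hsplit] at hcube; linarith
      have hGnn : 0 ≤ Gf m N r := by
        rw [Gf, if_neg hNz]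
        positivity
      rw [abs_of_nonneg hGnn]
      calc Gf m N r ≤ N^(2*m) := hGle
        _ ≤ N := pow_le_of_le_one hNpos.le hN1 (by omega)
        _ < ε := hNε
  · have hcont : ContinuousAt (fun z : ℝ × ℝ => (z.1^(2*m) - z.2^(2*m))^3 / z.1^(4*m))
        (N₀, r₀) := by
      apply ContinuousAt.div
      · fun_prop
      · fun_prop
      · exact pow_ne_zero _ (ne_of_gt hN0)
    obtain ⟨δ₁, hδ₁, hδ⟩ := Metric.continuousAt_iff.mp hcont ε hε
    refine ⟨min δ₁ N₀, lt_min hδ₁ hN0, fun N r hr hrN hdN hdr => ?_⟩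
    have hNpos : 0 < N := by
      have := abs_lt.mp (lt_of_lt_of_le hdN (min_le_right _ _)); linarith [this.1]
    have hd : dist (N, r) ((N₀, r₀) : ℝ × ℝ) < δ₁ := by
      rw [Prod.dist_eq]
      apply max_lt <;> rw [Real.dist_eq]
      · exact lt_of_lt_of_le hdN (min_le_left _ _)
      · exact lt_of_lt_of_le hdr (min_le_left _ _)
    have := hδ hd
    rw [Real.dist_eq] at this
    simpa [Gf, hNpos.ne', hN0.ne'] using this

lemma cf_mul_le (m : ℕ) (hm : 1 ≤ m) {N r : ℝ} (hr : 0 ≤ r) (hrN : r ≤ N) :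
    |cf m N r| * r ≤ 6*m * N^(2*m-1) := by
  by_cases hNz : N = 0
  · have hr0 : r = 0 := le_antisymm (hrN.trans_eq hNz) hr
    simp [cf, hNz, hr0]
    positivity
  · have hNpos : 0 < N := lt_of_le_of_ne (hr.trans hrN) (Ne.symm hNz)
    set A := N^(2*m) - r^(2*m) with hA
    have hA0 : 0 ≤ A := sub_nonneg.mpr (pow_le_pow_left₀ hr hrN _)
    have hAN : A ≤ N^(2*m) := by have := pow_nonneg hr (2*m); simp only [hA]; linarith
    have e2 : A^2 ≤ N^(4*m) := by
      calc A^2 ≤ (N^(2*m))^2 := pow_le_pow_left₀ hA0 hAN 2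
        _ = N^(4*m) := by rw [← pow_mul]; congr 1; ring
    have e5 : r^(2*m-2) * r ≤ N^(2*m-1) := by
      calc r^(2*m-2) * r ≤ N^(2*m-2) * N :=
            mul_le_mul (pow_le_pow_left₀ hr hrN _) hrN hr (pow_nonneg hNpos.le _)
        _ = N^(2*m-2+1) := (pow_succ N _).symm
        _ = N^(2*m-1) := by congr 1; omega
    have habs : |cf m N r| = 6*m * A^2 * r^(2*m-2) / N^(4*m) := by
      rw [cf, if_neg hNz, ← hA]
      rw [show -(6 * (m:ℝ)) * A^2 * r^(2*m-2) / N^(4*m)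
          = -(6 * (m:ℝ) * A^2 * r^(2*m-2) / N^(4*m)) from by ring, abs_neg,
        abs_of_nonneg (by positivity)]
    rw [habs, div_mul_eq_mul_div, div_le_iff₀ (pow_pos hNpos _)]
    have key : A^2 * (r^(2*m-2) * r) ≤ N^(4*m) * N^(2*m-1) :=
      mul_le_mul e2 e5 (by positivity) (by positivity)
    nlinarith [key]

lemma grad_cont {d : ℕ} (m : ℕ) (hm : 1 ≤ m) (N₀ : ℝ) (w₀ : Eucl d) (h1 : ‖w₀‖ ≤ N₀) :
    ∀ ε > (0:ℝ), ∃ δ > (0:ℝ), ∀ (N : ℝ) (w : Eucl d), ‖w‖ ≤ N →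
      |N - N₀| < δ → ‖w - w₀‖ < δ → ‖cf m N ‖w‖ • w - cf m N₀ ‖w₀‖ • w₀‖ < ε := by
  intro ε hε
  rcases eq_or_lt_of_le ((norm_nonneg w₀).trans h1) with hN0 | hN0
  · -- N₀ = 0, w₀ = 0
    have hw0 : w₀ = 0 := norm_eq_zero.mp (le_antisymm (h1.trans_eq hN0.symm) (norm_nonneg _))
    have hδpos : (0:ℝ) < min 1 (ε/(6*m+1)) := by
      apply lt_min one_pos; positivity
    refine ⟨min 1 (ε/(6*m+1)), hδpos, fun N w hw hdN hdw => ?_⟩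
    have hN : N < min 1 (ε/(6*m+1)) := by
      rw [← hN0, sub_zero, abs_of_nonneg ((norm_nonneg w).trans hw)] at hdN; exact hdN
    rw [hw0, smul_zero, sub_zero, norm_smul, Real.norm_eq_abs]
    calc |cf m N ‖w‖| * ‖w‖ ≤ 6*m * N^(2*m-1) := cf_mul_le m hm (norm_nonneg w) hw
      _ ≤ 6*m * N := by
        apply mul_le_mul_of_nonneg_left _ (by positivity)
        exact pow_le_of_le_one (n := 2*m-1) ((norm_nonneg w).trans hw)
          (hN.le.trans (min_le_left _ _)) (by omega)
      _ < ε := by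
        have h6 : (0:ℝ) < 6*m := by positivity
        have := lt_of_lt_of_le hN (min_le_right _ _)
        have hN' : (0:ℝ) ≤ N := (norm_nonneg w).trans hw
        rw [lt_div_iff₀ (by positivity : (0:ℝ) < 6*(m:ℝ)+1)] at this
        nlinarith
  · have hcont : ContinuousAt (fun z : ℝ × Eucl d =>
        (-(6 * m : ℝ) * (z.1 ^ (2*m) - ‖z.2‖ ^ (2*m)) ^ 2 * ‖z.2‖ ^ (2*m-2) / z.1 ^ (4*m))
          • z.2) ((N₀, w₀) : ℝ × Eucl d) := by
      apply ContinuousAt.fun_smul _ continuous_snd.continuousAt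
      apply ContinuousAt.div
      · fun_prop
      · fun_prop
      · exact pow_ne_zero _ (ne_of_gt hN0)
    obtain ⟨δ₁, hδ₁, hδ⟩ := Metric.continuousAt_iff.mp hcont ε hε
    refine ⟨min δ₁ N₀, lt_min hδ₁ hN0, fun N w hw hdN hdw => ?_⟩
    have hNpos : 0 < N := by
      have := abs_lt.mp (lt_of_lt_of_le hdN (min_le_right _ _)); linarith [this.1]
    have hd : dist ((N, w) : ℝ × Eucl d) ((N₀, w₀) : ℝ × Eucl d) < δ₁ := by
      rw [Prod.dist_eq]
      apply max_lt
      · rw [Real.dist_eq]; exact lt_of_lt_of_le hdN (min_le_left _ _)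
      · rw [dist_eq_norm]; exact lt_of_lt_of_le hdw (min_le_left _ _)
    have := hδ hd
    rw [dist_eq_norm] at this
    simpa [cf, hNpos.ne', hN0.ne'] using this
lemma dist_key_ordered {d : ℕ} {tHat : ℝ} {a : Pth d} (hba : Bdd a) {p q : ℝ × Pth d}
    (hp : tHat ≤ p.1) (hbp : Bdd p.2) (hbq : Bdd q.2) (hle : p.1 ≤ q.1) :
    |normC (zRel tHat a q) - normC (zRel tHat a p)|
        ≤ normC (shift p.2 (q.1 - p.1) - q.2) ∧
    ‖q.2 zeroPt - p.2 zeroPt‖ ≤ normC (shift p.2 (q.1 - p.1) - q.2) := by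
  have hq1 : tHat ≤ q.1 := hp.trans hle
  have hδ : (0:ℝ) ≤ q.1 - p.1 := sub_nonneg.mpr hle
  set δ := q.1 - p.1 with hδdef
  set A := shift a (p.1 - tHat) with hAdef
  have e1 : zRel tHat a p = p.2 - A := zRel_eq _ _ _ hp
  have e2 : zRel tHat a q = q.2 - shift A δ := by
    rw [zRel_eq _ _ _ hq1, hAdef, shift_shift a (sub_nonneg.mpr hp) hδ]
    congr 2
    ring
  have e3 : normC (zRel tHat a p) = normC (shift p.2 δ - shift A δ) := by
    rw [e1, ← shift_sub, normC_shift _ hδ]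
  have hbA : Bdd A := hba.shift _
  have hb1 : Bdd (q.2 - shift A δ) := hbq.sub (hbA.shift _)
  have hb2 : Bdd (shift p.2 δ - shift A δ) := (hbp.shift _).sub (hbA.shift _)
  have hb3 : Bdd (shift p.2 δ - q.2) := (hbp.shift _).sub hbq
  constructor
  · rw [e2, e3]
    have htri := abs_normC_sub_normC_le hb1 hb2
    have hpath : (q.2 - shift A δ) - (shift p.2 δ - shift A δ) = q.2 - shift p.2 δ := by
      abel
    rw [hpath] at htri
    have hneg : normC (q.2 - shift p.2 δ) = normC (shift p.2 δ - q.2) := by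
      rw [← normC_neg, neg_sub]
    rw [hneg] at htri
    exact htri
  · have happ : (shift p.2 δ - q.2) zeroPt = p.2 zeroPt - q.2 zeroPt := by
      rw [Pi.sub_apply, shift_zeroPt _ hδ]
    have := le_normC hb3 zeroPt
    rw [happ] at this
    rw [norm_sub_rev]
    exact this

lemma dist_key {d : ℕ} {tHat : ℝ} {a : Pth d} (hba : Bdd a) {p q : ℝ × Pth d}
    (hp : p ∈ LamHat d tHat) (hq : q ∈ LamHat d tHat) :
    |normC (zRel tHat a q) - normC (zRel tHat a p)| ≤ dInfty p q ∧
    ‖q.2 zeroPt - p.2 zeroPt‖ ≤ dInfty p q := by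
  have hbp : Bdd p.2 := bdd_of_mem_D0 hp.2
  have hbq : Bdd q.2 := bdd_of_mem_D0 hq.2
  by_cases hle : p.1 ≤ q.1
  · have hkey := dist_key_ordered hba hp.1 hbp hbq hle
    have hd : dInfty p q = |q.1 - p.1| + normC (shift p.2 (q.1 - p.1) - q.2) := by
      rw [dInfty, if_pos hle]
    rw [hd]
    have habs : (0:ℝ) ≤ |q.1 - p.1| := abs_nonneg _
    exact ⟨hkey.1.trans (by linarith), hkey.2.trans (by linarith)⟩
  · have hle' : q.1 ≤ p.1 := (not_le.mp hle).le
    have hkey := dist_key_ordered hba hq.1 hbq hbp hle'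
    have hd : dInfty p q = |p.1 - q.1| + normC (shift q.2 (p.1 - q.1) - p.2) := by
      rw [dInfty, if_neg hle]
    rw [hd]
    have habs : (0:ℝ) ≤ |p.1 - q.1| := abs_nonneg _
    constructor
    · rw [abs_sub_comm]
      exact hkey.1.trans (by linarith)
    · rw [norm_sub_rev]
      exact hkey.2.trans (by linarith)

/-- first-order part of Lemma 3.1: continuity, vanishing
horizontal derivative, and the explicit first vertical derivative of
`S_m^{t̂,a}(t,x) = S_m(t,x,t̂,a)` on `Λ̂^{t̂}`. -/
theorem Sm_first_order_derivatives {d : ℕ} (m : ℕ) (hm : 1 ≤ m)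
    (tHat : ℝ) (a : Pth d) (ha : (tHat, a) ∈ LamHat d 0) :
    DContinuousOn (fun p => SmP m p (tHat, a)) (LamHat d tHat) ∧
    (∀ p ∈ LamHat d tHat, HasHorizDerivAt (fun p' => SmP m p' (tHat, a)) p 0) ∧
    (∀ p ∈ LamHat d tHat, ∀ i : Fin d,
      HasVertDerivAt (fun p' => SmP m p' (tHat, a)) p i
        ((if normC (zRel tHat a p) = 0 then (0:ℝ)
          else -(6 * m : ℝ)
            * (normC (zRel tHat a p) ^ (2 * m) - ‖p.2 zeroPt - a zeroPt‖ ^ (2 * m)) ^ 2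
            * ‖p.2 zeroPt - a zeroPt‖ ^ (2 * m - 2)
            / normC (zRel tHat a p) ^ (4 * m))
          * ((p.2 zeroPt - a zeroPt) i))) ∧
    DContinuousOn (fun p =>
        ((if normC (zRel tHat a p) = 0 then (0:ℝ)
          else -(6 * m : ℝ)
            * (normC (zRel tHat a p) ^ (2 * m) - ‖p.2 zeroPt - a zeroPt‖ ^ (2 * m)) ^ 2
            * ‖p.2 zeroPt - a zeroPt‖ ^ (2 * m - 2)
            / normC (zRel tHat a p) ^ (4 * m))
          • (p.2 zeroPt - a zeroPt) : Eucl d))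
      (LamHat d tHat) := by
  have hba : Bdd a := bdd_of_mem_D0 ha.2
  refine ⟨?_, ?_, ?_, ?_⟩
  · -- continuity of S_m
    intro p hp ε hε
    have hbp : Bdd p.2 := bdd_of_mem_D0 hp.2
    have hbz : Bdd (zRel tHat a p) := bdd_zRel hbp hba
    have hrN : ‖p.2 zeroPt - a zeroPt‖ ≤ normC (zRel tHat a p) := by
      rw [← zRel_zeroPt tHat a p]; exact le_normC hbz zeroPt
    obtain ⟨δ, hδpos, hδ⟩ := Gf_cont m hm _ _ (norm_nonneg _) hrN ε hε
    refine ⟨δ, hδpos, fun q hq hdq => ?_⟩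
    have hbq : Bdd q.2 := bdd_of_mem_D0 hq.2
    have hbzq : Bdd (zRel tHat a q) := bdd_zRel hbq hba
    have hk := dist_key hba hp hq
    have h1 : |normC (zRel tHat a q) - normC (zRel tHat a p)| < δ := lt_of_le_of_lt hk.1 hdq
    have h2 : |‖q.2 zeroPt - a zeroPt‖ - ‖p.2 zeroPt - a zeroPt‖| < δ := by
      refine lt_of_le_of_lt ?_ (lt_of_le_of_lt hk.2 hdq)
      have := abs_norm_sub_norm_le (q.2 zeroPt - a zeroPt) (p.2 zeroPt - a zeroPt)
      simpa [sub_sub_sub_cancel_right] using this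
    have hrq : ‖q.2 zeroPt - a zeroPt‖ ≤ normC (zRel tHat a q) := by
      rw [← zRel_zeroPt tHat a q]; exact le_normC hbzq zeroPt
    have := hδ _ _ (norm_nonneg _) hrq h1 h2
    simpa [SmP_eq, Real.norm_eq_abs] using this
  · -- horizontal derivative
    intro p hp
    have key : ∀ h : ℝ, 0 < h →
        SmP m (p.1 + h, shift p.2 h) (tHat, a) = SmP m p (tHat, a) := by
      intro h hh
      rw [SmP_eq, SmP_eq]
      have e1 : (shift p.2 h) zeroPt = p.2 zeroPt := shift_zeroPt _ hh.le
      have e2 : normC (zRel tHat a (p.1 + h, shift p.2 h)) = normC (zRel tHat a p) := by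
        rw [zRel_eq _ _ (p.1 + h, shift p.2 h) (show tHat ≤ p.1 + h from by
              have := hp.1; linarith),
          zRel_eq _ _ _ hp.1]
        show normC (shift p.2 h - shift a (p.1 + h - tHat)) = _
        rw [show p.1 + h - tHat = (p.1 - tHat) + h from by ring,
          ← shift_shift a (sub_nonneg.mpr hp.1) hh.le, ← shift_sub,
          normC_shift _ hh.le]
      show Gf m (normC (zRel tHat a (p.1 + h, shift p.2 h))) ‖shift p.2 h zeroPt - a zeroPt‖
          = Gf m (normC (zRel tHat a p)) ‖p.2 zeroPt - a zeroPt‖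
      rw [e1, e2]
    have heq : (fun _ : ℝ => (0:ℝ))
        =ᶠ[𝓝[>] (0:ℝ)] fun h : ℝ =>
          (SmP m (p.1 + h, shift p.2 h) (tHat,a) - SmP m p (tHat,a)) / h := by
      filter_upwards [self_mem_nhdsWithin] with h hh
      rw [key h hh, sub_self, zero_div]
    exact Tendsto.congr' heq tendsto_const_nhds
  · -- vertical derivative
    intro p hp i
    have ht : tHat ≤ p.1 := hp.1
    have hbp : Bdd p.2 := bdd_of_mem_D0 hp.2
    have hbz0 : Bdd (zRel tHat a p) := bdd_zRel hbp hba
    set z : Pth d := zRel tHat a p with hzdef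
    have hbz : Bdd z := hbz0
    set w : Eucl d := p.2 zeroPt - a zeroPt with hwdef
    have hzw : z zeroPt = w := zRel_zeroPt tHat a p
    set e : Eucl d := stdBasis d i with hedef
    have he : ‖e‖ = 1 := by
      rw [hedef, stdBasis, EuclideanSpace.norm_single]; norm_num
    have hinner : ⟪w, e⟫ = w i := by
      rw [hedef, stdBasis, EuclideanSpace.inner_single_right]; simp
    set Su : ℝ := normC (vpert z (-(z zeroPt))) with hSudef
    have hSu0 : 0 ≤ Su := normC_nonneg _
    have hmax : ∀ v : Eucl d, normC (vpert z v) = max Su ‖w + v‖ := fun v => by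
      rw [normC_vpert hbz v, ← hSudef, hzw]
    have hN : normC z = max Su ‖w‖ := by
      have h0 := hmax 0; rwa [vpert_zero, add_zero] at h0
    have hwN : ‖w‖ ≤ normC z := by rw [← hzw]; exact le_normC hbz zeroPt
    have hF : ∀ h : ℝ, SmP m (p.1, vpert p.2 (h • e)) (tHat, a)
        = Gf m (max Su ‖w + h • e‖) ‖w + h • e‖ := by
      intro h
      rw [SmP_eq]
      have ez : zRel tHat a (p.1, vpert p.2 (h • e)) = vpert z (h • e) := by
        rw [zRel_eq tHat a _ (show tHat ≤ (p.1, vpert p.2 (h • e)).1 from ht)]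
        rw [hzdef, zRel_eq tHat a p ht]
        exact vpert_sub _ _ _
      rw [ez, hmax]
      congr 1
      show ‖vpert p.2 (h • e) zeroPt - a zeroPt‖ = ‖w + h • e‖
      rw [vpert_zeroPt, hwdef]
      congr 1
      abel
    have hFp : SmP m p (tHat, a) = Gf m (max Su ‖w‖) ‖w‖ := by
      rw [SmP_eq m tHat a p, ← hzdef, ← hwdef, hN]
    by_cases hc : normC z = 0
    · -- case N = 0 : everything vanishes
      rw [if_pos hc, zero_mul]
      have hmax0 : max Su ‖w‖ = 0 := by rw [← hN]; exact hc
      have hSuz : Su = 0 := le_antisymm (le_trans (le_max_left _ _) hmax0.le) hSu0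
      have hw0 : w = 0 := norm_eq_zero.mp
        (le_antisymm (le_trans (le_max_right _ _) hmax0.le) (norm_nonneg _))
      have hGdiag : ∀ t : ℝ, Gf m t t = 0 := by
        intro t
        rw [Gf]
        split_ifs with h
        · rfl
        · simp [sub_self]
      have hzero : ∀ h : ℝ, SmP m (p.1, vpert p.2 (h • e)) (tHat, a) = 0 := by
        intro h
        rw [hF h, hw0, zero_add, norm_smul, he, mul_one, hSuz, Real.norm_eq_abs,
          max_eq_right (abs_nonneg h), hGdiag]
      have hSmp : SmP m p (tHat, a) = 0 := by
        rw [hFp, hSuz, hw0, norm_zero, max_self, hGdiag]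
      have heq2 : (fun _ : ℝ => (0:ℝ)) =ᶠ[𝓝[≠] (0:ℝ)] fun h : ℝ =>
            (SmP m (p.1, vpert p.2 (h • e)) (tHat,a) - SmP m p (tHat,a)) / h := by
        filter_upwards with h
        rw [hzero h, hSmp, sub_self, zero_div]
      exact Tendsto.congr' heq2 tendsto_const_nhds
    · have hNpos : 0 < normC z := lt_of_le_of_ne (normC_nonneg z) (Ne.symm hc)
      rcases lt_or_eq_of_le hwN with hlt | heqw
      · -- case ‖w‖ < N : smooth regime
        have hSuN : Su = normC z := by
          rcases max_cases Su ‖w‖ with ⟨h1, h2⟩ | ⟨h1, h2⟩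
          · rw [hN, h1]
          · rw [hN, h1] at hlt; exact absurd hlt (lt_irrefl _)
        have hSupos : 0 < Su := by rw [hSuN]; exact hNpos
        have hq1 : ∀ h : ℝ, ‖w + h • e‖^2 = h^2 + 2*(w i)*h + ‖w‖^2 := by
          intro h
          rw [norm_add_sq_real, real_inner_smul_right, hinner, norm_smul, he,
            Real.norm_eq_abs, mul_one, sq_abs]
          ring
        have hq : HasDerivAt (fun h : ℝ => ‖w + h • e‖^2) (2 * (w i)) 0 := by
          have hfun : (fun h : ℝ => ‖w + h • e‖^2)
              = fun h : ℝ => h^2 + 2*(w i)*h + ‖w‖^2 := funext hq1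
          rw [hfun]
          have h1 : HasDerivAt (fun h : ℝ => h^2 + 2*(w i)*h + ‖w‖^2) (2*(w i)) 0 := by
            simpa using
              (((hasDerivAt_id (0:ℝ)).pow 2).add
                ((hasDerivAt_id (0:ℝ)).const_mul (2*(w i)))).add_const (‖w‖^2)
          exact h1
        have hq2 : HasDerivAt (fun h : ℝ => (‖w + h • e‖^2)^m)
            ((m:ℝ) * (‖w‖^2)^(m-1) * (2 * (w i))) 0 := by
          have := hq.fun_pow m
          simpa using this
        have hq3 : HasDerivAt
            (fun h : ℝ => (Su^(2*m) - (‖w + h • e‖^2)^m)^3 / Su^(4*m))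
            ((3:ℝ) * (Su^(2*m) - (‖w‖^2)^m)^2 *
              (-((m:ℝ) * (‖w‖^2)^(m-1) * (2 * (w i)))) / Su^(4*m)) 0 := by
          have := ((hq2.const_sub (Su^(2*m))).pow 3).div_const (Su^(4*m))
          simpa using this
        have hVeq : (if normC z = 0 then (0:ℝ)
              else -(6 * m : ℝ) * (normC z ^ (2 * m) - ‖w‖ ^ (2 * m)) ^ 2
                * ‖w‖ ^ (2 * m - 2) / normC z ^ (4 * m)) * (w i)
            = (3:ℝ) * (Su^(2*m) - (‖w‖^2)^m)^2 *
              (-((m:ℝ) * (‖w‖^2)^(m-1) * (2 * (w i)))) / Su^(4*m) := by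
          rw [if_neg hc, ← hSuN]
          rw [show (‖w‖^2)^m = ‖w‖^(2*m) from by rw [← pow_mul]]
          rw [show (‖w‖^2)^(m-1) = ‖w‖^(2*m-2) from by rw [← pow_mul]; congr 1; omega]
          field_simp
          ring
        rw [hVeq]
        have hG := hasDerivAt_iff_tendsto_slope.mp hq3
        have hf0 : (Su^(2*m) - (‖w + (0:ℝ) • e‖^2)^m)^3 / Su^(4*m)
            = SmP m p (tHat, a) := by
          rw [show w + (0:ℝ) • e = w from by simp, hFp,
            max_eq_left (by rw [hSuN]; exact hwN), Gf, if_neg hSupos.ne',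
            show (‖w‖^2)^m = ‖w‖^(2*m) from by rw [← pow_mul]]
        have hslopeEq : slope (fun h : ℝ => (Su^(2*m) - (‖w + h • e‖^2)^m)^3 / Su^(4*m)) 0
            =ᶠ[𝓝[≠] (0:ℝ)] fun h : ℝ =>
              (SmP m (p.1, vpert p.2 (h • e)) (tHat,a) - SmP m p (tHat,a)) / h := by
          have hev : ∀ᶠ h in 𝓝 (0:ℝ), |h| < normC z - ‖w‖ := by
            simpa using eventually_abs_sub_lt (0:ℝ) (by linarith : (0:ℝ) < normC z - ‖w‖)
          filter_upwards [eventually_nhdsWithin_of_eventually_nhds hev] with h hh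
          have hle : ‖w + h • e‖ ≤ Su := by
            calc ‖w + h • e‖ ≤ ‖w‖ + ‖h • e‖ := norm_add_le _ _
              _ = ‖w‖ + |h| := by rw [norm_smul, he, mul_one, Real.norm_eq_abs]
              _ ≤ normC z := by linarith
              _ = Su := hSuN.symm
          have hFh : SmP m (p.1, vpert p.2 (h • e)) (tHat,a)
              = (Su^(2*m) - (‖w + h • e‖^2)^m)^3 / Su^(4*m) := by
            rw [hF h, max_eq_left hle, Gf, if_neg hSupos.ne']
            rw [show (‖w + h • e‖^2)^m = ‖w + h • e‖^(2*m) from by rw [← pow_mul]]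
          simp only [slope_def_field, sub_zero]
          rw [hFh, hf0]
        exact Tendsto.congr' hslopeEq hG
      · -- case ‖w‖ = N : derivative vanishes
        have hV0 : (if normC z = 0 then (0:ℝ)
              else -(6 * m : ℝ) * (normC z ^ (2 * m) - ‖w‖ ^ (2 * m)) ^ 2
                * ‖w‖ ^ (2 * m - 2) / normC z ^ (4 * m)) * (w i) = 0 := by
          rw [if_neg hc, heqw, sub_self]
          simp
        rw [hV0]
        have hSule : Su ≤ normC z := by rw [hN]; exact le_max_left _ _
        have hSmp : SmP m p (tHat, a) = 0 := by
          rw [hFp, ← hN, heqw, Gf, if_neg hc, sub_self]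
          simp
        set C1 : ℝ := 4*m*(normC z + 3)^(2*m-1) with hC1
        have hC1nn : 0 ≤ C1 := by positivity
        set B : ℝ := C1^3 / (normC z/2)^(4*m) with hB
        have hbound : ∀ᶠ h in 𝓝[≠] (0:ℝ),
            ‖(SmP m (p.1, vpert p.2 (h • e)) (tHat,a) - SmP m p (tHat,a)) / h‖ ≤ B * h^2 := by
          have hsmall : ∀ᶠ h in 𝓝 (0:ℝ), |h| < min 1 (normC z/2) := by
            simpa using eventually_abs_sub_lt (0:ℝ) (lt_min one_pos (by linarith))
          filter_upwards [eventually_nhdsWithin_of_eventually_nhds hsmall,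
            self_mem_nhdsWithin] with h hh hne
          have hne' : h ≠ 0 := hne
          have habs : 0 < |h| := abs_pos.mpr hne'
          have hh1 : |h| < 1 := lt_of_lt_of_le hh (min_le_left _ _)
          have hh2 : |h| < normC z / 2 := lt_of_lt_of_le hh (min_le_right _ _)
          set r : ℝ := ‖w + h • e‖ with hr
          have hsm : ‖h • e‖ = |h| := by rw [norm_smul, he, mul_one, Real.norm_eq_abs]
          have hrN' : |r - normC z| ≤ |h| := by
            rw [← heqw]
            have := abs_norm_sub_norm_le (w + h • e) w
            simpa [hsm] using this
          have hrlb : normC z - |h| ≤ r := by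
            have := abs_le.mp hrN'; linarith [this.1]
          have hrub : r ≤ normC z + |h| := by
            have := abs_le.mp hrN'; linarith [this.2]
          have hrpos : 0 < r := by linarith
          set Nh : ℝ := max Su r with hNh
          have hNhr : r ≤ Nh := le_max_right _ _
          have hNhpos : 0 < Nh := lt_of_lt_of_le hrpos hNhr
          have hNhub : Nh ≤ r + 2*|h| := by
            apply max_le <;> linarith
          have hNh3 : Nh ≤ normC z + 3 := by linarith
          have hNhlb : normC z/2 ≤ Nh := by linarith
          have hdiff0 : 0 ≤ Nh^(2*m) - r^(2*m) :=
            sub_nonneg.mpr (pow_le_pow_left₀ hrpos.le hNhr _)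
          have hdiff : Nh^(2*m) - r^(2*m) ≤ C1 * |h| := by
            have hps := pow_succ_sub_le hrpos.le hNhr (2*m-1)
            have he1 : 2*m-1+1 = 2*m := by omega
            rw [he1] at hps
            have he2 : ((2*m-1 : ℕ) : ℝ) + 1 = 2*(m:ℝ) := by
              have h1 : (1:ℕ) ≤ 2*m := by omega
              rw [Nat.cast_sub h1]
              push_cast
              ring
            rw [he2] at hps
            calc Nh^(2*m) - r^(2*m) ≤ 2*(m:ℝ) * Nh^(2*m-1) * (Nh - r) := hps
              _ ≤ (2*(m:ℝ) * (normC z + 3)^(2*m-1)) * (2*|h|) := by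
                  apply mul_le_mul
                  · exact mul_le_mul_of_nonneg_left
                      (pow_le_pow_left₀ hNhpos.le hNh3 _) (by positivity)
                  · linarith
                  · linarith
                  · positivity
              _ = C1 * |h| := by rw [hC1]; ring
          have hFh : SmP m (p.1, vpert p.2 (h • e)) (tHat,a)
              = (Nh^(2*m) - r^(2*m))^3 / Nh^(4*m) := by
            rw [hF h, ← hr, ← hNh, Gf, if_neg hNhpos.ne']
          have hnum3 : (Nh^(2*m) - r^(2*m))^3 ≤ (C1*|h|)^3 :=
            pow_le_pow_left₀ hdiff0 hdiff 3
          have hden : (normC z/2)^(4*m) ≤ Nh^(4*m) :=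
            pow_le_pow_left₀ (by linarith) hNhlb _
          have hGfb : SmP m (p.1, vpert p.2 (h • e)) (tHat,a)
              ≤ (C1*|h|)^3 / (normC z/2)^(4*m) := by
            rw [hFh]
            exact div_le_div₀ (by positivity) hnum3 (by positivity) hden
          have hGf0 : 0 ≤ SmP m (p.1, vpert p.2 (h • e)) (tHat,a) := by
            rw [hFh]; positivity
          rw [hSmp, sub_zero, norm_div, Real.norm_eq_abs, Real.norm_eq_abs,
            div_le_iff₀ habs]
          calc |SmP m (p.1, vpert p.2 (h • e)) (tHat,a)|
              = SmP m (p.1, vpert p.2 (h • e)) (tHat,a) := abs_of_nonneg hGf0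
            _ ≤ (C1*|h|)^3 / (normC z/2)^(4*m) := hGfb
            _ = B * h^2 * |h| := by
                rw [hB]
                rw [show (C1*|h|)^3 = C1^3 * (|h|^2 * |h|) from by ring, sq_abs]
                field_simp
        have htb : Tendsto (fun h : ℝ => B * h^2) (𝓝[≠] (0:ℝ)) (𝓝 0) := by
          have h2 : Tendsto (fun h : ℝ => B * h^2) (𝓝 (0:ℝ)) (𝓝 (B * 0^2)) :=
            (continuous_const.mul (continuous_pow 2)).tendsto 0
          simpa using h2.mono_left nhdsWithin_le_nhds
        exact squeeze_zero_norm' hbound htb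

  · -- continuity of the gradient
    intro p hp ε hε
    have hbp : Bdd p.2 := bdd_of_mem_D0 hp.2
    have hbz : Bdd (zRel tHat a p) := bdd_zRel hbp hba
    have hrN : ‖p.2 zeroPt - a zeroPt‖ ≤ normC (zRel tHat a p) := by
      rw [← zRel_zeroPt tHat a p]; exact le_normC hbz zeroPt
    obtain ⟨δ, hδpos, hδ⟩ := grad_cont m hm _ _ hrN ε hε
    refine ⟨δ, hδpos, fun q hq hdq => ?_⟩
    have hbq : Bdd q.2 := bdd_of_mem_D0 hq.2
    have hbzq : Bdd (zRel tHat a q) := bdd_zRel hbq hba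
    have hk := dist_key hba hp hq
    have h1 : |normC (zRel tHat a q) - normC (zRel tHat a p)| < δ := lt_of_le_of_lt hk.1 hdq
    have h2 : ‖(q.2 zeroPt - a zeroPt) - (p.2 zeroPt - a zeroPt)‖ < δ := by
      rw [sub_sub_sub_cancel_right]
      exact lt_of_le_of_lt hk.2 hdq
    have hrq : ‖q.2 zeroPt - a zeroPt‖ ≤ normC (zRel tHat a q) := by
      rw [← zRel_zeroPt tHat a q]; exact le_normC hbzq zeroPt
    have := hδ (normC (zRel tHat a q)) (q.2 zeroPt - a zeroPt) hrq h1 h2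
    simpa [cf] using this

end PathHJB
end
end

section
/- Subadditivity-type inequality for Υ^{m,M} (Lemma 3.3): For every m ∈ ℕ⁺, every M ≥ 3 and all x, y ∈ 𝒟₀, one has Υ^{m,M}(x+y) ≤ 2^{2m-1} (Υ^{m,M}(x) + Υ^{m,M}(y)). -/
open Filter Topology MeasureTheory Matrix
open scoped RealInnerProductSpace

noncomputable section

namespace PathHJB

noncomputable def fAux (A B : ℝ) : ℝ := (A - B) ^ 3 / A ^ 2 + 3 * B

lemma fAux_zero : fAux 0 0 = 0 := by simp [fAux]

lemma fAux_mono_A {A A' B : ℝ} (hB : 0 ≤ B) (hBA : B ≤ A) (hAA' : A ≤ A') (hA : 0 < A) :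
    fAux A B ≤ fAux A' B := by
  have hA' : 0 < A' := lt_of_lt_of_le hA hAA'
  have hu : (0:ℝ) ≤ A - B := sub_nonneg.2 hBA
  have hs : (0:ℝ) ≤ A' - A := sub_nonneg.2 hAA'
  have h3 : (0:ℝ) ≤ 3 * A ^ 2 - (A - B) ^ 2 := by nlinarith [mul_nonneg hB hu]
  have hid : (A' - B) ^ 3 * A ^ 2 - (A - B) ^ 3 * A' ^ 2 =
      (A' - A) * A * ((A - B) ^ 2 * (A + 2 * B)) + (A' - A) ^ 2 * ((A - B) * (3 * A ^ 2 - (A - B) ^ 2))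
      + (A' - A) ^ 3 * A ^ 2 := by ring
  have h : (A - B) ^ 3 / A ^ 2 ≤ (A' - B) ^ 3 / A' ^ 2 := by
    rw [div_le_div_iff₀ (by positivity) (by positivity)]
    nlinarith [mul_nonneg (mul_nonneg hs hA.le) (mul_nonneg (sq_nonneg (A - B)) (by linarith : (0:ℝ) ≤ A + 2 * B)),
      mul_nonneg (sq_nonneg (A' - A)) (mul_nonneg hu h3),
      mul_nonneg (mul_nonneg (mul_nonneg hs hs) hs) (sq_nonneg A)]
  unfold fAux; linarith

lemma fAux_mono_B {A B B' : ℝ} (hB : 0 ≤ B) (hBB' : B ≤ B') (hB'A : B' ≤ A) (hA : 0 < A) :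
    fAux A B ≤ fAux A B' := by
  have hBA : B ≤ A := hBB'.trans hB'A
  have hu : (0:ℝ) ≤ A - B := sub_nonneg.2 hBA
  have hu' : (0:ℝ) ≤ A - B' := sub_nonneg.2 hB'A
  have hd : (0:ℝ) ≤ B' - B := sub_nonneg.2 hBB'
  have h3 : (0:ℝ) ≤ 3 * A ^ 2 - (A - B) ^ 2 - (A - B) * (A - B') - (A - B') ^ 2 := by
    have h1 : (A - B) * (A - B) ≤ A * A := mul_le_mul (by linarith) (by linarith) hu hA.le
    have h2 : (A - B) * (A - B') ≤ A * A := mul_le_mul (by linarith) (by linarith) hu' hA.le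
    have h4 : (A - B') * (A - B') ≤ A * A := mul_le_mul (by linarith) (by linarith) hu' hA.le
    nlinarith
  have key : (A - B) ^ 3 ≤ (A - B') ^ 3 + 3 * (B' - B) * A ^ 2 := by
    nlinarith [mul_nonneg hd h3]
  have h2 : (A - B) ^ 3 / A ^ 2 ≤ ((A - B') ^ 3 + 3 * (B' - B) * A ^ 2) / A ^ 2 := by gcongr
  have h3' : ((A - B') ^ 3 + 3 * (B' - B) * A ^ 2) / A ^ 2 = (A - B') ^ 3 / A ^ 2 + 3 * (B' - B) := by
    field_simp
  unfold fAux; rw [h3'] at h2; linarith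

lemma radon {u1 u2 A1 A2 : ℝ} (hu1 : 0 ≤ u1) (hu2 : 0 ≤ u2) (hA1 : 0 < A1) (hA2 : 0 < A2) :
    (u1 + u2) ^ 3 / (A1 + A2) ^ 2 ≤ u1 ^ 3 / A1 ^ 2 + u2 ^ 3 / A2 ^ 2 := by
  rw [div_add_div _ _ (by positivity) (by positivity), div_le_div_iff₀ (by positivity) (by positivity)]
  nlinarith [sq_nonneg (u1 * A2 - u2 * A1), mul_pos hA1 hA2, mul_nonneg hu1 hu2,
    mul_nonneg (mul_nonneg hu1 hA2.le) (sq_nonneg (u1 * A2 - u2 * A1)),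
    mul_nonneg (mul_nonneg hu2 hA1.le) (sq_nonneg (u1 * A2 - u2 * A1)),
    mul_nonneg (mul_nonneg hu1 hA1.le) (sq_nonneg (u1 * A2 - u2 * A1)),
    mul_nonneg (mul_nonneg hu2 hA2.le) (sq_nonneg (u1 * A2 - u2 * A1))]

lemma fAux_superadd {A1 B1 A2 B2 : ℝ} (hB1 : 0 ≤ B1) (h1 : B1 ≤ A1) (hB2 : 0 ≤ B2) (h2 : B2 ≤ A2) :
    fAux (A1 + A2) (B1 + B2) ≤ fAux A1 B1 + fAux A2 B2 := by
  rcases eq_or_lt_of_le (hB1.trans h1) with hA1 | hA1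
  · have hB1' : B1 = 0 := le_antisymm (hA1 ▸ h1) hB1
    simp [← hA1, hB1', fAux_zero]
  rcases eq_or_lt_of_le (hB2.trans h2) with hA2 | hA2
  · have hB2' : B2 = 0 := le_antisymm (hA2 ▸ h2) hB2
    simp [← hA2, hB2', fAux_zero]
  have h := radon (sub_nonneg.2 h1) (sub_nonneg.2 h2) hA1 hA2
  have he : A1 + A2 - (B1 + B2) = (A1 - B1) + (A2 - B2) := by ring
  unfold fAux
  rw [he]
  linarith

lemma fAux_smul {t A B : ℝ} (ht : 0 ≤ t) : fAux (t * A) (t * B) = t * fAux A B := by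
  rcases eq_or_lt_of_le ht with rfl | ht'
  · simp [fAux]
  rcases eq_or_ne A 0 with rfl | hA
  · simp [fAux]; ring
  unfold fAux
  field_simp



lemma ups_term_eq (m : ℕ) (hm : 1 ≤ m) (M : ℝ) {a c : ℝ} (hc : 0 ≤ c) (hca : c ≤ a) :
    ((if a = 0 then (0:ℝ) else (a ^ (2 * m) - c ^ (2 * m)) ^ 3 / a ^ (4 * m)) + M * c ^ (2 * m))
      = fAux (a ^ (2 * m)) (c ^ (2 * m)) + (M - 3) * c ^ (2 * m) := by
  have hm2 : 2 * m ≠ 0 := by omega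
  rcases eq_or_ne a 0 with rfl | ha
  · have hc0 : c = 0 := le_antisymm hca hc
    simp [hc0, fAux, zero_pow hm2]
  · have h4 : a ^ (4 * m) = (a ^ (2 * m)) ^ 2 := by
      rw [← pow_mul]; ring_nf
    rw [if_neg ha, h4]
    unfold fAux
    ring

lemma ups_term_nonneg (m : ℕ) (M : ℝ) (hM : 3 ≤ M) {a c : ℝ} (hc : 0 ≤ c) (hca : c ≤ a) :
    (0:ℝ) ≤ (if a = 0 then (0:ℝ) else (a ^ (2 * m) - c ^ (2 * m)) ^ 3 / a ^ (4 * m)) + M * c ^ (2 * m) := by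
  have ha : 0 ≤ a := hc.trans hca
  have h1 : (0:ℝ) ≤ M * c ^ (2 * m) := mul_nonneg (by linarith) (pow_nonneg hc _)
  have h2 : (0:ℝ) ≤ (if a = 0 then (0:ℝ) else (a ^ (2 * m) - c ^ (2 * m)) ^ 3 / a ^ (4 * m)) := by
    split
    · exact le_refl (0:ℝ)
    · exact div_nonneg (pow_nonneg (sub_nonneg.2 (pow_le_pow_left₀ hc hca _)) _) (pow_nonneg ha _)
  linarith

lemma key_ineq (m : ℕ) (hm : 1 ≤ m) (M : ℝ) (hM : 3 ≤ M)
    (a b c e a' c' : ℝ) (hb : 0 ≤ b) (hc : 0 ≤ c) (he : 0 ≤ e) (hc' : 0 ≤ c')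
    (hca : c ≤ a) (heb : e ≤ b) (hc'a' : c' ≤ a') (hab : a' ≤ a + b) (hce : c' ≤ c + e) :
    ((if a' = 0 then (0:ℝ) else (a' ^ (2 * m) - c' ^ (2 * m)) ^ 3 / a' ^ (4 * m)) + M * c' ^ (2 * m))
      ≤ 2 ^ (2 * m - 1) *
        (((if a = 0 then (0:ℝ) else (a ^ (2 * m) - c ^ (2 * m)) ^ 3 / a ^ (4 * m)) + M * c ^ (2 * m))
          + ((if b = 0 then (0:ℝ) else (b ^ (2 * m) - e ^ (2 * m)) ^ 3 / b ^ (4 * m)) + M * e ^ (2 * m))) := by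
  have ha : 0 ≤ a := hc.trans hca
  have ha'0 : 0 ≤ a' := hc'.trans hc'a'
  set t : ℝ := 2 ^ (2 * m - 1) with hts
  have htpos : (0:ℝ) < t := by positivity
  rcases eq_or_lt_of_le ha'0 with hA0 | ha'
  · have hc'0 : c' = 0 := le_antisymm (hA0 ▸ hc'a') hc'
    have hm2 : 2 * m ≠ 0 := by omega
    rw [← hA0, if_pos rfl, hc'0, zero_pow hm2, mul_zero, add_zero]
    exact mul_nonneg htpos.le (add_nonneg (ups_term_nonneg m M hM hc hca) (ups_term_nonneg m M hM he heb))
  rw [ups_term_eq m hm M hc hca, ups_term_eq m hm M he heb, ups_term_eq m hm M hc' hc'a']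
  have habpos : 0 < a + b := lt_of_lt_of_le ha' hab
  have hcea : c + e ≤ a + b := add_le_add hca heb
  have hpm_ab : (a + b) ^ (2 * m) ≤ t * (a ^ (2 * m) + b ^ (2 * m)) := add_pow_le ha hb (2 * m)
  have hpm_ce : (c + e) ^ (2 * m) ≤ t * (c ^ (2 * m) + e ^ (2 * m)) := add_pow_le hc he (2 * m)
  have hce_ab : t * (c ^ (2 * m) + e ^ (2 * m)) ≤ t * (a ^ (2 * m) + b ^ (2 * m)) :=
    mul_le_mul_of_nonneg_left (add_le_add (pow_le_pow_left₀ hc hca _) (pow_le_pow_left₀ he heb _)) htpos.le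
  have h1 : fAux (a' ^ (2 * m)) (c' ^ (2 * m)) ≤ fAux ((a + b) ^ (2 * m)) (c' ^ (2 * m)) :=
    fAux_mono_A (pow_nonneg hc' _) (pow_le_pow_left₀ hc' hc'a' _) (pow_le_pow_left₀ ha'0 hab _)
      (pow_pos ha' _)
  have h2 : fAux ((a + b) ^ (2 * m)) (c' ^ (2 * m)) ≤ fAux ((a + b) ^ (2 * m)) ((c + e) ^ (2 * m)) :=
    fAux_mono_B (pow_nonneg hc' _) (pow_le_pow_left₀ hc' hce _)
      (pow_le_pow_left₀ (add_nonneg hc he) hcea _) (pow_pos habpos _)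
  have h3 : fAux ((a + b) ^ (2 * m)) ((c + e) ^ (2 * m))
      ≤ fAux (t * (a ^ (2 * m) + b ^ (2 * m))) ((c + e) ^ (2 * m)) :=
    fAux_mono_A (pow_nonneg (add_nonneg hc he) _) (pow_le_pow_left₀ (add_nonneg hc he) hcea _)
      hpm_ab (pow_pos habpos _)
  have h4 : fAux (t * (a ^ (2 * m) + b ^ (2 * m))) ((c + e) ^ (2 * m))
      ≤ fAux (t * (a ^ (2 * m) + b ^ (2 * m))) (t * (c ^ (2 * m) + e ^ (2 * m))) :=
    fAux_mono_B (pow_nonneg (add_nonneg hc he) _) hpm_ce hce_ab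
      (lt_of_lt_of_le (pow_pos habpos _) hpm_ab)
  have h5 : fAux (t * (a ^ (2 * m) + b ^ (2 * m))) (t * (c ^ (2 * m) + e ^ (2 * m)))
      = t * fAux (a ^ (2 * m) + b ^ (2 * m)) (c ^ (2 * m) + e ^ (2 * m)) := fAux_smul htpos.le
  have h6 : fAux (a ^ (2 * m) + b ^ (2 * m)) (c ^ (2 * m) + e ^ (2 * m))
      ≤ fAux (a ^ (2 * m)) (c ^ (2 * m)) + fAux (b ^ (2 * m)) (e ^ (2 * m)) :=
    fAux_superadd (pow_nonneg hc _) (pow_le_pow_left₀ hc hca _) (pow_nonneg he _)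
      (pow_le_pow_left₀ he heb _)
  have hM' : (0:ℝ) ≤ M - 3 := by linarith
  have hMc : (M - 3) * c' ^ (2 * m) ≤ (M - 3) * (t * (c ^ (2 * m) + e ^ (2 * m))) :=
    mul_le_mul_of_nonneg_left ((pow_le_pow_left₀ hc' hce _).trans hpm_ce) hM'
  have hfin : t * (fAux (a ^ (2 * m)) (c ^ (2 * m)) + fAux (b ^ (2 * m)) (e ^ (2 * m)))
      + (M - 3) * (t * (c ^ (2 * m) + e ^ (2 * m)))
      = t * ((fAux (a ^ (2 * m)) (c ^ (2 * m)) + (M - 3) * c ^ (2 * m))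
          + (fAux (b ^ (2 * m)) (e ^ (2 * m)) + (M - 3) * e ^ (2 * m))) := by ring
  have hmul : t * fAux (a ^ (2 * m) + b ^ (2 * m)) (c ^ (2 * m) + e ^ (2 * m))
      ≤ t * (fAux (a ^ (2 * m)) (c ^ (2 * m)) + fAux (b ^ (2 * m)) (e ^ (2 * m))) :=
    mul_le_mul_of_nonneg_left h6 htpos.le
  linarith



lemma D0_bddAbove {d : ℕ} {x : Pth d} (hx : x ∈ D0 d) :
    BddAbove (Set.range fun θ : PathDom => ‖x θ‖) := by
  obtain ⟨⟨hrc, hll⟩, hlim⟩ := hx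
  have h1 : ∀ᶠ θ : PathDom in atBot, ‖x θ‖ ≤ 1 := by
    have hmem : ∀ᶠ θ : PathDom in atBot, x θ ∈ Metric.closedBall (0 : Eucl d) 1 :=
      hlim (Metric.closedBall_mem_nhds (0 : Eucl d) one_pos)
    refine hmem.mono ?_
    intro θ hθ
    simpa [mem_closedBall_zero_iff] using hθ
  obtain ⟨T, hT⟩ := eventually_atBot.1 h1
  -- compactness of {θ | T ≤ θ}
  have hK : IsCompact {θ : PathDom | T ≤ θ} := by
    have h2 : {θ : PathDom | T ≤ θ} = Subtype.val ⁻¹' (Set.Icc T.1 0) := by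
      ext θ
      simp only [Set.mem_setOf_eq, Set.mem_preimage, Set.mem_Icc]
      exact ⟨fun h => ⟨h, θ.2⟩, fun h => h.1⟩
    rw [h2]
    exact (isClosed_Iic.isProperMap_subtypeVal).isCompact_preimage isCompact_Icc
  have hloc : ∀ θ : PathDom, ∃ Mθ : ℝ, ∀ᶠ η in 𝓝 θ, ‖x η‖ ≤ Mθ := by
    intro θ
    obtain ⟨L, hL⟩ := hll θ
    refine ⟨max (‖x θ‖ + 1) (‖L‖ + 1), ?_⟩
    have hu : {η : PathDom | η.1 < θ.1} ∪ {η : PathDom | θ.1 ≤ η.1} = Set.univ := by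
      ext η; simp [lt_or_ge]
    have hnθ : 𝓝 θ = 𝓝[{η : PathDom | η.1 < θ.1}] θ ⊔ 𝓝[{η : PathDom | θ.1 ≤ η.1}] θ := by
      rw [← nhdsWithin_union, hu, nhdsWithin_univ]
    rw [hnθ, eventually_sup]
    constructor
    · have hev : ∀ᶠ η in 𝓝[{η : PathDom | η.1 < θ.1}] θ, x η ∈ Metric.closedBall L 1 :=
        hL (Metric.closedBall_mem_nhds L one_pos)
      refine hev.mono ?_
      intro η hη
      have : ‖x η - L‖ ≤ 1 := by simpa [mem_closedBall_iff_norm, dist_eq_norm] using hη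
      have : ‖x η‖ ≤ ‖L‖ + 1 := by
        calc ‖x η‖ = ‖x η - L + L‖ := by rw [sub_add_cancel]
        _ ≤ ‖x η - L‖ + ‖L‖ := norm_add_le _ _
        _ ≤ ‖L‖ + 1 := by linarith
      exact this.trans (le_max_right _ _)
    · have hev : ∀ᶠ η in 𝓝[{η : PathDom | θ.1 ≤ η.1}] θ, x η ∈ Metric.closedBall (x θ) 1 :=
        (hrc θ) (Metric.closedBall_mem_nhds (x θ) one_pos)
      refine hev.mono ?_
      intro η hη
      have : ‖x η - x θ‖ ≤ 1 := by simpa [mem_closedBall_iff_norm, dist_eq_norm] using hη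
      have h' : ‖x η‖ ≤ ‖x θ‖ + 1 := by
        calc ‖x η‖ = ‖x η - x θ + x θ‖ := by rw [sub_add_cancel]
        _ ≤ ‖x η - x θ‖ + ‖x θ‖ := norm_add_le _ _
        _ ≤ ‖x θ‖ + 1 := by linarith
      exact h'.trans (le_max_left _ _)
  choose Mθ hMθ using hloc
  obtain ⟨t, -, ht⟩ := hK.elim_nhds_subcover (fun θ => {η | ‖x η‖ ≤ Mθ θ}) (fun θ _ => hMθ θ)
  refine ⟨1 + ∑ σ ∈ t, |Mθ σ|, ?_⟩
  rintro r ⟨θ, rfl⟩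
  have hsum : (0:ℝ) ≤ ∑ σ ∈ t, |Mθ σ| := Finset.sum_nonneg fun σ _ => abs_nonneg _
  rcases le_total θ T with hθT | hTθ
  · exact (hT θ hθT).trans (by linarith)
  · have hθK : θ ∈ {η : PathDom | T ≤ η} := hTθ
    have := ht hθK
    simp only [Set.mem_iUnion] at this
    obtain ⟨σ, hσt, hσ⟩ := this
    have h1 : ‖x θ‖ ≤ Mθ σ := hσ
    have h2 : |Mθ σ| ≤ ∑ σ' ∈ t, |Mθ σ'| :=
      Finset.single_le_sum (fun σ' _ => abs_nonneg (Mθ σ')) hσt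
    calc ‖x θ‖ ≤ Mθ σ := h1
    _ ≤ |Mθ σ| := le_abs_self _
    _ ≤ ∑ σ' ∈ t, |Mθ σ'| := h2
    _ ≤ 1 + ∑ σ' ∈ t, |Mθ σ'| := by linarith

/-- Lemma 3.3: for `m ∈ ℕ⁺`, `M ≥ 3`, and `x, y ∈ 𝒟₀`,
`Υ^{m,M}(x+y) ≤ 2^{2m-1} (Υ^{m,M}(x) + Υ^{m,M}(y))`. -/

theorem ups_subadditivity {d : ℕ} (m : ℕ) (hm : 1 ≤ m) (M : ℝ) (hM : 3 ≤ M)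
    (x y : Pth d) (hx : x ∈ D0 d) (hy : y ∈ D0 d) :
    Ups0 m M (x + y) ≤ 2 ^ (2 * m - 1) * (Ups0 m M x + Ups0 m M y) := by
  haveI : Nonempty PathDom := ⟨zeroPt⟩
  have hbx := D0_bddAbove hx
  have hby := D0_bddAbove hy
  have hbxy : BddAbove (Set.range fun θ : PathDom => ‖(x + y) θ‖) := by
    obtain ⟨Mx, hMx⟩ := hbx
    obtain ⟨My, hMy⟩ := hby
    refine ⟨Mx + My, ?_⟩
    rintro r ⟨θ, rfl⟩
    calc ‖(x + y) θ‖ = ‖x θ + y θ‖ := rfl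
    _ ≤ ‖x θ‖ + ‖y θ‖ := norm_add_le _ _
    _ ≤ Mx + My := add_le_add (hMx ⟨θ, rfl⟩) (hMy ⟨θ, rfl⟩)
  have hca : ‖x zeroPt‖ ≤ normC x := le_ciSup hbx zeroPt
  have heb : ‖y zeroPt‖ ≤ normC y := le_ciSup hby zeroPt
  have hc'a' : ‖(x + y) zeroPt‖ ≤ normC (x + y) := le_ciSup hbxy zeroPt
  have hab : normC (x + y) ≤ normC x + normC y := by
    refine ciSup_le fun θ => ?_
    calc ‖(x + y) θ‖ = ‖x θ + y θ‖ := rfl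
    _ ≤ ‖x θ‖ + ‖y θ‖ := norm_add_le _ _
    _ ≤ normC x + normC y := add_le_add (le_ciSup hbx θ) (le_ciSup hby θ)
  have hb : 0 ≤ normC y := (norm_nonneg _).trans heb
  have hce : ‖(x + y) zeroPt‖ ≤ ‖x zeroPt‖ + ‖y zeroPt‖ := norm_add_le _ _
  simp only [Ups0]
  exact key_ineq m hm M hM (normC x) (normC y) (‖x zeroPt‖) (‖y zeroPt‖)
    (normC (x + y)) (‖(x + y) zeroPt‖) hb (norm_nonneg _) (norm_nonneg _) (norm_nonneg _)
    hca heb hc'a' hab hce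

end PathHJB
end
end
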